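/- Let N ≥ 2 be an integer, let L > 0 with L ∉ 𝒩, and let λ ∈ ℂ. Suppose φ₁, …, φ_N : ℝ → ℂ each satisfy the KdV spectral ODE with parameter λ on [0,L], with the boundary conditions φ_j(0) = φ₁(0) for all j, Σ_{j=1}^N φ_j''(0) = 0, and φ_j(L) = 0, φ_j'(0) = 0, φ_j'(L) = 0 for all j. Then Σ_{j=1}^N φ_j vanishes identically on [0,L] if and only if every φ_j vanishes identically on [0,L]. -/

import Mathlib

open Set Complex

/-- A function `φ : ℝ → ℂ` satisfies the KdV spectral ODE with parameter `lam` on `[0, L]`: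
it is three times continuously differentiable and `lam·φ + φ' + φ''' = 0` on `[0, L]`. -/
def KdVSpectralODE (lam : ℂ) (L : ℝ) (φ : ℝ → ℂ) : Prop :=
  ContDiff ℝ 3 φ ∧
    ∀ x ∈ Set.Icc (0 : ℝ) L, lam * φ x + deriv φ x + iteratedDeriv 3 φ x = 0

/-- The critical set 𝒩 of Rosier. -/
def criticalN : Set ℝ :=
  {L : ℝ | ∃ k l : ℕ, 0 < k ∧ 0 < l ∧
    L = (2 * Real.pi / Real.sqrt 3) * Real.sqrt ((k : ℝ) ^ 2 + (k : ℝ) * l + (l : ℝ) ^ 2)}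

lemma c3_pack {φ : ℝ → ℂ} (h : ContDiff ℝ 3 φ) :
    Differentiable ℝ φ ∧ Differentiable ℝ (deriv φ) ∧ Differentiable ℝ (deriv (deriv φ)) ∧
      Continuous (deriv (deriv (deriv φ))) := by
  have h3 : ContDiff ℝ ((2:ℕ) + 1) φ := by norm_num at h ⊢; exact h
  have h2 : ContDiff ℝ 2 (deriv φ) := (contDiff_succ_iff_deriv.mp h3).2.2
  have h2' : ContDiff ℝ ((1:ℕ) + 1) (deriv φ) := by norm_num at h2 ⊢; exact h2
  have h1 : ContDiff ℝ 1 (deriv (deriv φ)) := (contDiff_succ_iff_deriv.mp h2').2.2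
  have h1' : ContDiff ℝ ((0:ℕ) + 1) (deriv (deriv φ)) := by norm_num at h1 ⊢; exact h1
  have h0 : ContDiff ℝ 0 (deriv (deriv (deriv φ))) := (contDiff_succ_iff_deriv.mp h1').2.2
  exact ⟨h3.differentiable (by norm_num), h2.differentiable (by norm_num),
    h1.differentiable (by norm_num), h0.continuous⟩

lemma hasDerivAt_lin_exp (p q c : ℂ) (x : ℝ) :
    HasDerivAt (fun x : ℝ => (p + q*x) * Complex.exp (c*x))
      ((q + c*p + c*q*x) * Complex.exp (c*x)) x := by
  have hexp : HasDerivAt (fun x : ℝ => Complex.exp (c*x)) (Complex.exp (c*x) * c) x := by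
    simpa using (((hasDerivAt_id (x:ℂ)).const_mul c).cexp).comp_ofReal
  have hlin : HasDerivAt (fun x : ℝ => p + q*(x:ℂ)) q x := by
    simpa using (((hasDerivAt_id (x:ℂ)).const_mul q).const_add p).comp_ofReal
  have : HasDerivAt (fun x : ℝ => (p + q*(x:ℂ)) * Complex.exp (c*x)) _ x := hlin.mul hexp
  convert this using 1
  ring

lemma key_identity {lam : ℂ} {L : ℝ} (hL : 0 ≤ L) {φ : ℝ → ℂ} (hφ : ContDiff ℝ 3 φ)
    (hode : ∀ x ∈ Icc (0:ℝ) L, lam * φ x + deriv φ x + deriv (deriv (deriv φ)) x = 0)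
    (h00 : φ 0 = 0) (h0L : φ L = 0) (h10 : deriv φ 0 = 0) (h1L : deriv φ L = 0)
    (p q c : ℂ) (hc : c^3 + c = lam) :
    (∫ x in (0:ℝ)..L, φ x * ((1 + 3*c^2) * q * Complex.exp (c * x))) =
      deriv (deriv φ) L * (p + q*L) * Complex.exp (c*L) - deriv (deriv φ) 0 * p := by
  obtain ⟨hd0, hd1, hd2, hc3⟩ := c3_pack hφ
  set g  : ℝ → ℂ := fun x => (p + q*x) * Complex.exp (c*x) with hg
  set g₁ : ℝ → ℂ := fun x => ((q + c*p) + c*q*x) * Complex.exp (c*x) with hg₁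
  set g₂ : ℝ → ℂ := fun x => ((2*c*q + c^2*p) + c^2*q*x) * Complex.exp (c*x) with hg₂
  set g₃ : ℝ → ℂ := fun x => ((3*c^2*q + c^3*p) + c^3*q*x) * Complex.exp (c*x) with hg₃
  have hgd : ∀ x : ℝ, HasDerivAt g (g₁ x) x := by
    intro x; have := hasDerivAt_lin_exp p q c x
    convert this using 1 <;> (simp only [hg₁]; try ring)
  have hgd1 : ∀ x : ℝ, HasDerivAt g₁ (g₂ x) x := by
    intro x; have := hasDerivAt_lin_exp (q + c*p) (c*q) c x
    convert this using 1 <;> (simp only [hg₂]; try ring)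
  have hgd2 : ∀ x : ℝ, HasDerivAt g₂ (g₃ x) x := by
    intro x; have := hasDerivAt_lin_exp (2*c*q + c^2*p) (c^2*q) c x
    convert this using 1 <;> (simp only [hg₃]; try ring)
  set H : ℝ → ℂ := fun x =>
    deriv (deriv φ) x * g x - deriv φ x * g₁ x + φ x * (g₂ x + g x) with hH
  have hHd : ∀ x ∈ uIcc (0:ℝ) L,
      HasDerivAt H (φ x * ((1 + 3*c^2) * q * Complex.exp (c * x))) x := by
    intro x hx
    rw [uIcc_of_le hL] at hx
    have hD : HasDerivAt H (deriv (deriv (deriv φ)) x * g x + deriv (deriv φ) x * g₁ x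
        - (deriv (deriv φ) x * g₁ x + deriv φ x * g₂ x)
        + (deriv φ x * (g₂ x + g x) + φ x * (g₃ x + g₁ x))) x := by
      exact (((hd2 x).hasDerivAt.mul (hgd x)).sub ((hd1 x).hasDerivAt.mul (hgd1 x))).add
        (((hd0 x).hasDerivAt.mul ((hgd2 x).add (hgd x))))
    convert hD using 1
    have h3 : deriv (deriv (deriv φ)) x = - (lam * φ x) - deriv φ x := by
      have := hode x hx; linear_combination this
    rw [h3]
    simp only [hg, hg₁, hg₂, hg₃]
    linear_combination (-(φ x * Complex.exp (c*(x:ℂ)) * (p + q*(x:ℂ)))) * hc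
  have hcont : Continuous fun x : ℝ => φ x * ((1 + 3*c^2) * q * Complex.exp (c * x)) := by
    exact hd0.continuous.mul (continuous_const.mul
      (Complex.continuous_exp.comp (continuous_const.mul Complex.continuous_ofReal)))
  rw [intervalIntegral.integral_eq_sub_of_hasDerivAt hHd (hcont.intervalIntegrable 0 L)]
  simp only [hH, hg, hg₁, hg₂, h00, h0L, h10, h1L]
  push_cast
  simp [Complex.exp_zero]
  ring

lemma third_order_unique {c₀ c₁ : ℂ} {L : ℝ} {φ : ℝ → ℂ} (hφ : ContDiff ℝ 3 φ)
    (hode : ∀ x ∈ Icc (0:ℝ) L, deriv (deriv (deriv φ)) x = c₀ * φ x + c₁ * deriv φ x)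
    (t₀ : ℝ) (ht₀ : t₀ = 0 ∨ t₀ = L)
    (h0 : φ t₀ = 0) (h1 : deriv φ t₀ = 0) (h2 : deriv (deriv φ) t₀ = 0) :
    ∀ x ∈ Icc (0:ℝ) L, φ x = 0 := by
  obtain ⟨hd0, hd1, hd2, hc3⟩ := c3_pack hφ
  set E' := ℂ × ℂ × ℂ with hE'
  let A : E' →L[ℝ] ℂ := (ContinuousLinearMap.fst ℝ ℂ ℂ).comp (ContinuousLinearMap.snd ℝ ℂ (ℂ × ℂ))
  let B : E' →L[ℝ] ℂ := (ContinuousLinearMap.snd ℝ ℂ ℂ).comp (ContinuousLinearMap.snd ℝ ℂ (ℂ × ℂ))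
  let C : E' →L[ℝ] ℂ := c₀ • (ContinuousLinearMap.fst ℝ ℂ (ℂ × ℂ)) + c₁ • A
  let V : E' →L[ℝ] E' := A.prod (B.prod C)
  let f : ℝ → E' := fun t => (φ t, deriv φ t, deriv (deriv φ) t)
  have hVapp : ∀ p : E', V p = (p.2.1, p.2.2, c₀ * p.1 + c₁ * p.2.1) := fun p => rfl
  have hlip : ∀ t : ℝ, LipschitzWith ‖V‖₊ (fun p => V p) := fun _ => V.lipschitz
  have hf' : ∀ t ∈ Icc (0:ℝ) L, HasDerivAt f (V (f t)) t := by
    intro t ht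
    have : HasDerivAt f (deriv φ t, deriv (deriv φ) t, deriv (deriv (deriv φ)) t) t :=
      ((hd0 t).hasDerivAt.prodMk ((hd1 t).hasDerivAt.prodMk (hd2 t).hasDerivAt))
    rw [hVapp]
    simpa [f, hode t ht] using this
  have hcf : ContinuousOn f (Icc (0:ℝ) L) :=
    (hd0.continuous.prodMk (hd1.continuous.prodMk hd2.continuous)).continuousOn
  have hg' : ∀ t : ℝ, HasDerivAt (fun _ : ℝ => ((0:ℂ), (0:ℂ), (0:ℂ))) (V ((0:ℂ),(0:ℂ),(0:ℂ))) t := by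
    intro t
    have : V ((0:ℂ),(0:ℂ),(0:ℂ)) = ((0:ℂ),(0:ℂ),(0:ℂ)) := by rw [hVapp]; simp
    rw [this]; exact hasDerivAt_const _ _
  have hft₀ : f t₀ = ((0:ℂ),(0:ℂ),(0:ℂ)) := by simp [f, h0, h1, h2]
  have key : EqOn f (fun _ => ((0:ℂ),(0:ℂ),(0:ℂ))) (Icc (0:ℝ) L) := by
    rcases ht₀ with rfl | rfl
    · exact ODE_solution_unique hlip hcf
        (fun t ht => (hf' t (Ico_subset_Icc_self ht)).hasDerivWithinAt)
        continuousOn_const (fun t ht => (hg' t).hasDerivWithinAt) hft₀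
    · exact ODE_solution_unique_of_mem_Icc_left (s := fun _ => univ)
        (fun t _ => (hlip t).lipschitzOnWith)
        hcf (fun t ht => (hf' t (Ioc_subset_Icc_self ht)).hasDerivWithinAt)
        (fun _ _ => trivial)
        continuousOn_const (fun t ht => (hg' t).hasDerivWithinAt) (fun _ _ => trivial) hft₀
  intro x hx
  simpa [f] using congrArg Prod.fst (key hx)

lemma exists_kl_aux (m n : ℤ) (hm : 0 < m) (hn : n ≠ 0) (hmn : m + n ≠ 0) :
    ∃ k l : ℕ, 0 < k ∧ 0 < l ∧ (k:ℤ)^2 + k*l + l^2 = m^2 + m*n + n^2 := by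
  rcases lt_trichotomy n 0 with hn' | hn' | hn'
  · rcases lt_trichotomy (m + n) 0 with h | h | h
    · refine ⟨(-(m+n)).toNat, m.toNat, ?_, ?_, ?_⟩
      · omega
      · omega
      · rw [Int.toNat_of_nonneg (by omega), Int.toNat_of_nonneg (by omega)]; ring
    · exact absurd h hmn
    · refine ⟨(m+n).toNat, (-n).toNat, ?_, ?_, ?_⟩
      · omega
      · omega
      · rw [Int.toNat_of_nonneg (by omega), Int.toNat_of_nonneg (by omega)]; ring
  · exact absurd hn' hn
  · refine ⟨m.toNat, n.toNat, by omega, by omega, ?_⟩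
    rw [Int.toNat_of_nonneg (by omega), Int.toNat_of_nonneg (by omega)]

lemma exists_kl (m n : ℤ) (hm : m ≠ 0) (hn : n ≠ 0) (hmn : m + n ≠ 0) :
    ∃ k l : ℕ, 0 < k ∧ 0 < l ∧ (k:ℤ)^2 + k*l + l^2 = m^2 + m*n + n^2 := by
  rcases lt_trichotomy m 0 with h | h | h
  · obtain ⟨k, l, hk, hl, hkl⟩ := exists_kl_aux (-m) (-n) (by omega) (by omega) (by omega)
    exact ⟨k, l, hk, hl, by rw [hkl]; ring⟩
  · exact absurd h hm
  · exact exists_kl_aux m n h hn hmn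

lemma rosier {L : ℝ} (hL : 0 < L) (hLN : L ∉ criticalN) {lam : ℂ} {φ : ℝ → ℂ}
    (hφ : ContDiff ℝ 3 φ)
    (hode : ∀ x ∈ Icc (0:ℝ) L, lam * φ x + deriv φ x + deriv (deriv (deriv φ)) x = 0)
    (h00 : φ 0 = 0) (h0L : φ L = 0) (h10 : deriv φ 0 = 0) (h1L : deriv φ L = 0) :
    ∀ x ∈ Icc (0:ℝ) L, φ x = 0 := by
  by_cases hb : deriv (deriv φ) L = 0
  · exact third_order_unique (c₀ := -lam) (c₁ := -1) hφ
      (fun x hx => by linear_combination (hode x hx)) L (Or.inr rfl) h0L h1L hb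
  exfalso
  set a := deriv (deriv φ) 0 with ha
  set b := deriv (deriv φ) L with hbdef
  have hLC : (L:ℂ) ≠ 0 := Complex.ofReal_ne_zero.mpr hL.ne'
  -- two consequences of the integral identity
  have keyP : ∀ c : ℂ, c^3 + c = lam → a = b * Complex.exp (c * L) := by
    intro c hc
    have h := key_identity hL.le hφ hode h00 h0L h10 h1L 1 0 c hc
    simp only [mul_zero, zero_mul] at h
    rw [intervalIntegral.integral_zero] at h
    linear_combination h
  have keyQ : ∀ c : ℂ, c^3 + c = lam → 1 + 3*c^2 = 0 → False := by
    intro c hc hcc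
    have h := key_identity hL.le hφ hode h00 h0L h10 h1L 0 1 c hc
    rw [hcc] at h
    simp only [zero_mul, mul_zero] at h
    rw [intervalIntegral.integral_zero] at h
    have : b * Complex.exp (c * L) * L = 0 := by linear_combination -h
    rcases mul_eq_zero.mp this with h' | h'
    · rcases mul_eq_zero.mp h' with h'' | h''
      · exact hb h''
      · exact Complex.exp_ne_zero _ h''
    · exact hLC h'
  -- roots of the characteristic polynomial
  obtain ⟨c₁, hc₁⟩ : ∃ c : ℂ, c^3 + c = lam := by
    have hdeg : (Polynomial.X^3 + Polynomial.X - Polynomial.C lam : Polynomial ℂ).degree = 3 := by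
      compute_degree!
    obtain ⟨z, hz⟩ := Complex.exists_root (f := Polynomial.X^3 + Polynomial.X - Polynomial.C lam)
      (by rw [hdeg]; norm_num)
    refine ⟨z, ?_⟩
    have := hz
    simp only [Polynomial.IsRoot, Polynomial.eval_sub, Polynomial.eval_add, Polynomial.eval_pow,
      Polynomial.eval_X, Polynomial.eval_C] at this
    linear_combination this
  obtain ⟨s, hs⟩ : ∃ s : ℂ, s^2 = -3*c₁^2 - 4 :=
    IsAlgClosed.exists_pow_nat_eq (-3*c₁^2 - 4) (by norm_num)
  have hc₂ : ((-c₁+s)/2)^3 + ((-c₁+s)/2) = lam := by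
    linear_combination hc₁ + ((s - 3*c₁)/8) * hs
  have hc₃ : ((-c₁-s)/2)^3 + ((-c₁-s)/2) = lam := by
    linear_combination hc₁ + ((-s - 3*c₁)/8) * hs
  -- equal exponentials
  have e12 : Complex.exp (c₁ * L) = Complex.exp (((-c₁+s)/2) * L) :=
    mul_left_cancel₀ hb (by rw [← keyP _ hc₁, ← keyP _ hc₂])
  have e23 : Complex.exp (((-c₁+s)/2) * L) = Complex.exp (((-c₁-s)/2) * L) :=
    mul_left_cancel₀ hb (by rw [← keyP _ hc₂, ← keyP _ hc₃])
  -- extract integers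
  obtain ⟨m, hmL⟩ : ∃ m : ℤ, ((3*c₁ - s)/2) * L = m * (2 * Real.pi * Complex.I) := by
    apply Complex.exp_eq_one_iff.mp
    have hsplit : c₁ * (L:ℂ) = ((-c₁+s)/2) * L + ((3*c₁ - s)/2) * L := by ring
    rw [hsplit, Complex.exp_add] at e12
    exact mul_left_cancel₀ (Complex.exp_ne_zero _) (by rw [mul_one]; exact e12)
  obtain ⟨n, hnL⟩ : ∃ n : ℤ, s * L = n * (2 * Real.pi * Complex.I) := by
    apply Complex.exp_eq_one_iff.mp
    have hsplit : ((-c₁+s)/2) * (L:ℂ) = ((-c₁-s)/2) * L + s * L := by ring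
    rw [hsplit, Complex.exp_add] at e23
    exact mul_left_cancel₀ (Complex.exp_ne_zero _) (by rw [mul_one]; exact e23)
  -- nonvanishing of m, n, m+n
  have hm0 : m ≠ 0 := by
    intro h; rw [h] at hmL
    simp only [Int.cast_zero, zero_mul] at hmL
    rcases mul_eq_zero.mp hmL with h' | h'
    · exact keyQ c₁ hc₁ (by linear_combination (1/4) * hs + ((3*c₁+s)/2) * h')
    · exact hLC h'
  have hn0 : n ≠ 0 := by
    intro h; rw [h] at hnL
    simp only [Int.cast_zero, zero_mul] at hnL
    rcases mul_eq_zero.mp hnL with h' | h'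
    · exact keyQ _ hc₂ (by linear_combination (1/4) * hs + ((s - 3*c₁)/2) * h')
    · exact hLC h'
  have hmn0 : m + n ≠ 0 := by
    intro h
    have hsum : ((3*c₁ + s)/2) * (L:ℂ) = ((m:ℂ) + n) * (2 * Real.pi * Complex.I) := by
      linear_combination hmL + hnL
    rw [show ((m:ℂ) + n) = ((m + n : ℤ) : ℂ) by push_cast; ring, h] at hsum
    simp only [Int.cast_zero, zero_mul] at hsum
    rcases mul_eq_zero.mp hsum with h' | h'
    · exact keyQ c₁ hc₁ (by linear_combination (1/4) * hs + ((3*c₁ - s)/2) * h')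
    · exact hLC h'
  -- the length equation
  have h1 : (3:ℂ) * c₁ * L = 2 * Real.pi * Complex.I * (2*m + n) := by
    linear_combination 2 * hmL + hnL
  have key : 3*((L:ℝ):ℂ)^2 = 4*((Real.pi:ℝ):ℂ)^2*((m:ℂ)^2 + (m:ℂ)*(n:ℂ) + (n:ℂ)^2) := by
    linear_combination (3/4)*((L:ℝ):ℂ)^2 * hs
      - (1/4)*(3*c₁*(L:ℂ) + 2*(Real.pi:ℂ)*Complex.I*(2*(m:ℂ)+(n:ℂ))) * h1
      - (3/4)*(s*(L:ℂ) + 2*(Real.pi:ℂ)*Complex.I*(n:ℂ)) * hnL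
      - (4*(Real.pi:ℂ)^2*((m:ℂ)^2 + (m:ℂ)*(n:ℂ) + (n:ℂ)^2)) * Complex.I_sq
  have hreal : 3*L^2 = 4*Real.pi^2*((m:ℝ)^2 + (m:ℝ)*(n:ℝ) + (n:ℝ)^2) := by
    exact_mod_cast key
  -- produce the critical length
  obtain ⟨k, l, hk, hl, hkl⟩ := exists_kl m n hm0 hn0 hmn0
  have hklR : ((k:ℝ)^2 + (k:ℝ)*(l:ℝ) + (l:ℝ)^2) = ((m:ℝ)^2 + (m:ℝ)*(n:ℝ) + (n:ℝ)^2) := by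
    exact_mod_cast hkl
  apply hLN
  refine ⟨k, l, hk, hl, ?_⟩
  have hKpos : (0:ℝ) < (k:ℝ)^2 + (k:ℝ)*(l:ℝ) + (l:ℝ)^2 := by positivity
  have h3 : (Real.sqrt 3)^2 = 3 := Real.sq_sqrt (by norm_num)
  have hKs : (Real.sqrt ((k:ℝ)^2 + (k:ℝ)*(l:ℝ) + (l:ℝ)^2))^2
      = (k:ℝ)^2 + (k:ℝ)*(l:ℝ) + (l:ℝ)^2 := Real.sq_sqrt hKpos.le
  have hsq : L^2 = (2 * Real.pi / Real.sqrt 3 *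
      Real.sqrt ((k:ℝ)^2 + (k:ℝ)*(l:ℝ) + (l:ℝ)^2))^2 := by
    rw [mul_pow, div_pow, h3, hKs, hklR]
    nlinarith [hreal, Real.pi_pos]
  have hpos : 0 ≤ 2 * Real.pi / Real.sqrt 3 *
      Real.sqrt ((k:ℝ)^2 + (k:ℝ)*(l:ℝ) + (l:ℝ)^2) := by positivity
  have := congrArg Real.sqrt hsq
  rwa [Real.sqrt_sq hL.le, Real.sqrt_sq hpos] at this

theorem stmt10 (N : ℕ) (hN : 2 ≤ N) (L : ℝ) (hL : 0 < L) (hLN : L ∉ criticalN)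
    (lam : ℂ) (φ : Fin N → ℝ → ℂ)
    (hode : ∀ j, KdVSpectralODE lam L (φ j))
    (hb0 : ∀ j, φ j 0 = φ ⟨0, by omega⟩ 0)
    (hb1 : (∑ j, iteratedDeriv 2 (φ j) 0) = 0)
    (hb2 : ∀ j, φ j L = 0)
    (hb3 : ∀ j, deriv (φ j) 0 = 0)
    (hb4 : ∀ j, deriv (φ j) L = 0) :
    (∀ x ∈ Set.Icc (0 : ℝ) L, (∑ j, φ j x) = 0) ↔
      (∀ j, ∀ x ∈ Set.Icc (0 : ℝ) L, φ j x = 0) := by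
  have iter3 : ∀ f : ℝ → ℂ, iteratedDeriv 3 f = deriv (deriv (deriv f)) := by
    intro f
    rw [show (3:ℕ) = 2+1 from rfl, iteratedDeriv_succ, show (2:ℕ) = 1+1 from rfl,
      iteratedDeriv_succ, show (1:ℕ) = 0+1 from rfl, iteratedDeriv_succ, iteratedDeriv_zero]
  constructor
  · intro hsum j
    have hN0 : (N:ℂ) ≠ 0 := Nat.cast_ne_zero.mpr (by omega)
    have hφ0 : φ ⟨0, by omega⟩ 0 = 0 := by
      have hs0 := hsum 0 ⟨le_refl 0, hL.le⟩
      have hsc : (∑ i, φ i 0) = (N : ℂ) * φ ⟨0, by omega⟩ 0 := by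
        rw [Finset.sum_congr rfl (fun i _ => hb0 i)]
        simp [Finset.sum_const, Finset.card_univ, mul_comm]
      rw [hsc] at hs0
      exact (mul_eq_zero.mp hs0).resolve_left hN0
    obtain ⟨hcd, hO⟩ := hode j
    have hO' : ∀ x ∈ Set.Icc (0:ℝ) L,
        lam * φ j x + deriv (φ j) x + deriv (deriv (deriv (φ j))) x = 0 := by
      intro x hx
      have := hO x hx
      rwa [iter3] at this
    exact rosier hL hLN hcd hO' ((hb0 j).trans hφ0) (hb2 j) (hb3 j) (hb4 j)
  · intro h x hx
    exact Finset.sum_eq_zero (fun j _ => h j x hx)
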